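/- Let W = 1, 2 ≤ d < ∞, and Φ : ℝ → ℝ^d be C¹. Suppose f ∈ ℝ^d is such that the gradient flow trajectory w(t) for L_f(w) = (1/2)‖f − Φ(w)‖², w(0)=0, satisfies inf_t L_f(w(t)) = 0. Then either f = Φ(w) for some w ∈ ℝ, or f equals one of the limits lim_{w→+∞} Φ(w), lim_{w→−∞} Φ(w) (when these exist). -/

import Mathlib

open MeasureTheory Filter Topology Set

/-- The square loss for a one-parameter model. -/
noncomputable def loss1 {d : ℕ} (Φ : ℝ → EuclideanSpace ℝ (Fin d))
    (f : EuclideanSpace ℝ (Fin d)) (w : ℝ) : ℝ :=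
  (1 / 2) * ‖f - Φ w‖ ^ 2

/-- Aux: if the trajectory is unbounded above and the loss along it is antitone with
infimum approaching 0, then the loss tends to 0 at `atTop`. -/
lemma aux_tendsto (L : ℝ → ℝ) (w : ℝ → ℝ) (hw0 : w 0 = 0)
    (hwc : ContinuousOn w (Ici 0))
    (hL0 : ∀ x, 0 ≤ L x)
    (hanti : AntitoneOn (fun t => L (w t)) (Ici 0))
    (hub : ¬ BddAbove (w '' Ici 0))
    (hinf : ∀ ε > (0:ℝ), ∃ t ≥ (0:ℝ), L (w t) < ε) :
    Tendsto L atTop (nhds 0) := by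
  rw [tendsto_order]
  constructor
  · intro a ha
    exact Eventually.of_forall fun x => lt_of_lt_of_le ha (hL0 x)
  · intro a ha
    obtain ⟨t₀, ht₀, hlt⟩ := hinf a ha
    -- bound of w on [0, t₀]
    have hcomp : IsCompact (w '' Icc 0 t₀) :=
      (isCompact_Icc).image_of_continuousOn (hwc.mono (Icc_subset_Ici_self))
    obtain ⟨M, hM⟩ := hcomp.bddAbove
    filter_upwards [eventually_gt_atTop (max M 0)] with x hx
    -- w is unbounded above, so some t' with w t' > x
    obtain ⟨y, ⟨t', ht', rfl⟩, hxy⟩ := not_bddAbove_iff.1 hub x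
    -- IVT on [0, t']
    have hx0 : (0:ℝ) ≤ x := le_of_lt (lt_of_le_of_lt (le_max_right M 0) hx)
    have hmem : x ∈ Icc (w 0) (w t') := ⟨by rw [hw0]; exact hx0, hxy.le⟩
    obtain ⟨t, ht, hwt⟩ := intermediate_value_Icc ht' (hwc.mono (Icc_subset_Ici_self)) hmem
    have htt₀ : t₀ ≤ t := by
      by_contra h
      push_neg at h
      have : w t ≤ M := hM ⟨t, ⟨ht.1, h.le⟩, rfl⟩
      rw [hwt] at this
      exact absurd (lt_of_le_of_lt this (lt_of_le_of_lt (le_max_left M 0) hx)) (lt_irrefl x)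
    calc L x = L (w t) := by rw [hwt]
    _ ≤ L (w t₀) := hanti ht₀ (le_trans ht₀ htt₀) htt₀
    _ < a := hlt

/-- Aux: loss tends to 0 implies Φ tends to f. -/
lemma aux_phi {d : ℕ} (Φ : ℝ → EuclideanSpace ℝ (Fin d)) (f : EuclideanSpace ℝ (Fin d))
    (l : Filter ℝ) (h : Tendsto (loss1 Φ f) l (nhds 0)) : Tendsto Φ l (nhds f) := by
  rw [tendsto_iff_norm_sub_tendsto_zero]
  have h2 : Tendsto (fun x => Real.sqrt (2 * loss1 Φ f x)) l (nhds (Real.sqrt (2 * 0))) :=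
    (Real.continuous_sqrt.tendsto _).comp (h.const_mul 2)
  rw [show Real.sqrt (2 * 0) = 0 by norm_num] at h2
  refine h2.congr fun x => ?_
  simp only [loss1]
  rw [show (2:ℝ) * ((1/2) * ‖f - Φ x‖ ^ 2) = ‖f - Φ x‖ ^ 2 by ring,
    Real.sqrt_sq (norm_nonneg _), norm_sub_rev]

/-- With one parameter, a learnable target is either attained by `Φ` or is one of the
limits of `Φ` at `±∞`. -/
theorem one_param_learnable_characterization (d : ℕ) (hd : 2 ≤ d)
    (Φ : ℝ → EuclideanSpace ℝ (Fin d))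
    (hΦ : ContDiff ℝ 1 Φ) (hlip : LocallyLipschitz (deriv Φ))
    (f : EuclideanSpace ℝ (Fin d)) (w : ℝ → ℝ) (hw0 : w 0 = 0)
    (hflow : ∀ t ≥ (0 : ℝ), HasDerivAt w (-(deriv (loss1 Φ f) (w t))) t)
    (hlearn : (⨅ t : Set.Ici (0 : ℝ), loss1 Φ f (w t)) = 0) :
    (∃ u : ℝ, Φ u = f) ∨
    (Filter.Tendsto Φ Filter.atTop (nhds f)) ∨
    (Filter.Tendsto Φ Filter.atBot (nhds f)) := by
  set L := loss1 Φ f with hLdef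
  have hL0 : ∀ x, 0 ≤ L x := fun x => by
    simp only [hLdef, loss1]
    positivity
  have hLdiff : Differentiable ℝ L := by
    have : Differentiable ℝ (fun x => f - Φ x) :=
      (differentiable_const f).sub (hΦ.differentiable one_ne_zero)
    exact (this.norm_sq ℝ).const_mul _
  have hLcont : Continuous L := hLdiff.continuous
  -- continuity of w on Ici 0
  have hwc : ContinuousOn w (Ici 0) := fun t ht =>
    ((hflow t ht).continuousAt).continuousWithinAt
  -- the loss is antitone along the trajectory
  have hanti : AntitoneOn (fun t => L (w t)) (Ici 0) := by
    apply antitoneOn_of_deriv_nonpos (convex_Ici 0)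
    · exact hLcont.comp_continuousOn hwc
    · intro t ht
      rw [interior_Ici] at ht
      exact (((hLdiff (w t)).hasDerivAt).comp t (hflow t (le_of_lt ht))).differentiableAt.differentiableWithinAt
    · intro t ht
      rw [interior_Ici] at ht
      have hc := ((hLdiff (w t)).hasDerivAt).comp t (hflow t (le_of_lt ht))
      rw [show (fun t => L (w t)) = L ∘ w from rfl, hc.deriv]
      nlinarith [sq_nonneg (deriv L (w t))]
  have hinf : ∀ ε > (0:ℝ), ∃ t ≥ (0:ℝ), L (w t) < ε := by
    intro ε hε
    have : (⨅ t : Set.Ici (0 : ℝ), L (w t)) < ε := by rw [hlearn]; exact hε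
    obtain ⟨⟨t, ht⟩, h⟩ := exists_lt_of_ciInf_lt this
    exact ⟨t, ht, h⟩
  by_cases hub : BddAbove (w '' Ici 0)
  · by_cases hlb : BddBelow (w '' Ici 0)
    · -- bounded case: minimum attained on compact closure
      left
      set S := closure (w '' Ici 0) with hSdef
      obtain ⟨a, ha⟩ := hlb
      obtain ⟨b, hb⟩ := hub
      have hsub : S ⊆ Icc a b := by
        apply closure_minimal _ isClosed_Icc
        intro x hx
        exact ⟨ha hx, hb hx⟩
      have hScomp : IsCompact S := isCompact_Icc.of_isClosed_subset isClosed_closure hsub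
      have hSne : S.Nonempty := ⟨w 0, subset_closure ⟨0, self_mem_Ici, rfl⟩⟩
      obtain ⟨u, huS, hmin⟩ := hScomp.exists_isMinOn hSne hLcont.continuousOn
      have hle : L u ≤ 0 := by
        rw [← hlearn]
        apply le_ciInf
        intro t
        exact hmin (subset_closure ⟨t.1, t.2, rfl⟩)
      have hLu : L u = 0 := le_antisymm hle (hL0 u)
      refine ⟨u, ?_⟩
      have h1 : ‖f - Φ u‖ ^ 2 = 0 := by
        simp only [hLdef, loss1] at hLu
        linarith
      have h2 : f - Φ u = 0 := by
        rw [← norm_eq_zero]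
        exact pow_eq_zero_iff (n := 2) (by norm_num) |>.1 h1
      rw [sub_eq_zero] at h2
      exact h2.symm
    · -- unbounded below
      right; right
      have himg : (fun t => -(w t)) '' Ici 0 = -(w '' Ici 0) := by
        ext x
        simp only [Set.mem_image, Set.mem_neg, neg_eq_iff_eq_neg]
      have hub' : ¬ BddAbove ((fun t => -(w t)) '' Ici 0) := by
        rw [himg]
        intro h
        exact hlb (bddAbove_neg.1 h)
      have hanti' : AntitoneOn (fun t => (fun x => L (-x)) ((fun t => -(w t)) t)) (Ici 0) := by
        intro a ha b hb hab
        simp only [neg_neg]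
        exact hanti ha hb hab
      have hinf' : ∀ ε > (0:ℝ), ∃ t ≥ (0:ℝ), (fun x => L (-x)) ((fun t => -(w t)) t) < ε := by
        intro ε hε
        obtain ⟨t, ht, h⟩ := hinf ε hε
        exact ⟨t, ht, by simpa using h⟩
      have hT' : Tendsto (fun x => L (-x)) atTop (nhds 0) :=
        aux_tendsto (fun x => L (-x)) (fun t => -(w t)) (by simp [hw0]) hwc.neg
          (fun x => hL0 (-x)) hanti' hub' hinf'
      have hT : Tendsto L atBot (nhds 0) := by
        have := hT'.comp tendsto_neg_atBot_atTop
        exact this.congr fun x => by simp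
      exact aux_phi Φ f atBot hT
  · -- unbounded above
    right; left
    exact aux_phi Φ f atTop (aux_tendsto L w hw0 hwc hL0 hanti hub hinf)
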